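/- Let ω be a fixed angle with 0 < ω < π/2, let r > 0 and s ≤ 0, and define σ(X) = (1/2)·sin(ω)·((2r·sin(ω) − s)X² + 2r·cos(ω)X − s)² / (X·(cos(ω)X − sin(ω))·(X²+1)) for X > 0 with cos(ω)·X − sin(ω) > 0. Then for every such X, the derivative σ'(X) = 0 if and only if (2r·sin(ω) − s)X² + 2r·cos(ω)X − s = 0 or (−s·sin(ω) + 2r·sin²(ω) + 4r·cos²(ω))X⁴ − 2cos(ω)(s + 3r·sin(ω))X³ + 6r·sin²(ω)X² + 2cos(ω)(r·sin(ω) − s)X + s·sin(ω) = 0. -/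

import Mathlib

open Real

theorem critical_points_arc_vertical_line
    (ω r s : ℝ) (hω₀ : 0 < ω) (hω₁ : ω < π / 2) (hr : 0 < r) (hs : s ≤ 0)
    (σ : ℝ → ℝ)
    (hσ : σ = fun X => (1 / 2) * Real.sin ω *
      ((2 * r * Real.sin ω - s) * X ^ 2 + 2 * r * Real.cos ω * X - s) ^ 2 /
      (X * (Real.cos ω * X - Real.sin ω) * (X ^ 2 + 1))) :
    ∀ X : ℝ, 0 < X → Real.cos ω * X - Real.sin ω > 0 →
      (deriv σ X = 0 ↔
        (2 * r * Real.sin ω - s) * X ^ 2 + 2 * r * Real.cos ω * X - s = 0 ∨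
        (-(s * Real.sin ω) + 2 * r * Real.sin ω ^ 2 + 4 * r * Real.cos ω ^ 2) * X ^ 4 -
            2 * Real.cos ω * (s + 3 * r * Real.sin ω) * X ^ 3 +
            6 * r * Real.sin ω ^ 2 * X ^ 2 +
            2 * Real.cos ω * (r * Real.sin ω - s) * X + s * Real.sin ω = 0) := by
  intro X hX hden
  have hsin : 0 < Real.sin ω := Real.sin_pos_of_pos_of_lt_pi hω₀ (hω₁.trans (half_lt_self Real.pi_pos))
  set N : ℝ := (2 * r * Real.sin ω - s) * X ^ 2 + 2 * r * Real.cos ω * X - s with hNdef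
  set Q : ℝ := (-(s * Real.sin ω) + 2 * r * Real.sin ω ^ 2 + 4 * r * Real.cos ω ^ 2) * X ^ 4 -
      2 * Real.cos ω * (s + 3 * r * Real.sin ω) * X ^ 3 +
      6 * r * Real.sin ω ^ 2 * X ^ 2 +
      2 * Real.cos ω * (r * Real.sin ω - s) * X + s * Real.sin ω with hQdef
  have hgX : X * (Real.cos ω * X - Real.sin ω) * (X ^ 2 + 1) ≠ 0 := by positivity
  -- derivative of numerator
  have hN : HasDerivAt (fun x : ℝ => (1 / 2) * Real.sin ω *
      ((2 * r * Real.sin ω - s) * x ^ 2 + 2 * r * Real.cos ω * x - s) ^ 2)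
      ((1 / 2) * Real.sin ω * (2 * N * (2 * (2 * r * Real.sin ω - s) * X + 2 * r * Real.cos ω))) X := by
    have h1 : HasDerivAt (fun x : ℝ => (2 * r * Real.sin ω - s) * x ^ 2 + 2 * r * Real.cos ω * x - s)
        (2 * (2 * r * Real.sin ω - s) * X + 2 * r * Real.cos ω) X := by
      have := (((hasDerivAt_pow 2 X).const_mul (2 * r * Real.sin ω - s)).add
        ((hasDerivAt_id X).const_mul (2 * r * Real.cos ω))).sub_const s
      refine this.congr_deriv ?_
      norm_num
      ring
    have := (h1.pow 2).const_mul ((1 / 2) * Real.sin ω)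
    refine this.congr_deriv ?_
    ring
  -- derivative of denominator
  have hD : HasDerivAt (fun x : ℝ => x * (Real.cos ω * x - Real.sin ω) * (x ^ 2 + 1))
      ((Real.cos ω * X - Real.sin ω) * (X ^ 2 + 1) + X * Real.cos ω * (X ^ 2 + 1)
        + X * (Real.cos ω * X - Real.sin ω) * (2 * X)) X := by
    have h1 : HasDerivAt (fun x : ℝ => Real.cos ω * x - Real.sin ω) (Real.cos ω) X := by
      simpa using ((hasDerivAt_id X).const_mul (Real.cos ω)).sub_const (Real.sin ω)
    have h2 : HasDerivAt (fun x : ℝ => x ^ 2 + 1) (2 * X) X := by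
      simpa using (hasDerivAt_pow 2 X).add_const 1
    have := ((hasDerivAt_id X).mul h1).mul h2
    refine this.congr_deriv ?_
    simp only [id_eq, Pi.mul_apply]
    ring
  have hσ' : HasDerivAt σ
      (((1 / 2) * Real.sin ω * (2 * N * (2 * (2 * r * Real.sin ω - s) * X + 2 * r * Real.cos ω))
          * (X * (Real.cos ω * X - Real.sin ω) * (X ^ 2 + 1))
        - (1 / 2) * Real.sin ω * N ^ 2 *
          ((Real.cos ω * X - Real.sin ω) * (X ^ 2 + 1) + X * Real.cos ω * (X ^ 2 + 1)
            + X * (Real.cos ω * X - Real.sin ω) * (2 * X)))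
        / (X * (Real.cos ω * X - Real.sin ω) * (X ^ 2 + 1)) ^ 2) X := by
    rw [hσ]
    exact hN.div hD hgX
  have hkey : deriv σ X = (1 / 2) * Real.sin ω * (N * (-Q))
      / (X * (Real.cos ω * X - Real.sin ω) * (X ^ 2 + 1)) ^ 2 := by
    rw [hσ'.deriv]
    congr 1
    rw [hNdef, hQdef]
    ring
  rw [hkey]
  rw [div_eq_zero_iff]
  have hg2 : (X * (Real.cos ω * X - Real.sin ω) * (X ^ 2 + 1)) ^ 2 ≠ 0 := pow_ne_zero _ hgX
  constructor
  · rintro (h | h)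
    · have : N * (-Q) = 0 := by
        have hc : (1 / 2) * Real.sin ω ≠ 0 := by positivity
        field_simp at h
        have h2 : N * Q = 0 := (mul_eq_zero.mp (by linarith : Real.sin ω * (N * Q) = 0)).resolve_left hsin.ne'
        rw [mul_neg, h2, neg_zero]
      rcases mul_eq_zero.mp this with h' | h'
      · exact Or.inl h'
      · exact Or.inr (by linarith [neg_eq_zero.mp h'])
    · exact absurd h hg2
  · rintro (h | h)
    · left; rw [h]; ring
    · left; rw [h]; ring
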